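/- Any nonempty proper subset of (K^×)^k of the form {z : z_1^{m_1}⋯z_k^{m_k} = d} with d a root of unity or 1 (d ∈ K^×_prim) and (m_1,…,m_k) ∈ ℤ^k is a finite union of '1-fundamental' subsets, i.e., sets of the form f_M^{-1}({d'} × (K^×)^{k-1}) for some M ∈ GL(k,ℤ) and d' ∈ K^×. -/

import Mathlib

/-- For `A ∈ GL(k,ℤ)`, the monomial map `f_A : (K^×)^k → (K^×)^k`,
`(f_A(z))_i = ∏_j z_j^{a_{ij}}`. -/
def fA {K : Type*} [Field K] {k : ℕ} (M : Matrix (Fin k) (Fin k) ℤ)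
    (z : Fin k → Kˣ) : Fin k → Kˣ :=
  fun i => ∏ j, z j ^ (M i j)

/-- The linear functional `x ↦ ∑ i, m i * x i`. -/
noncomputable def lcomb {k : ℕ} (m : Fin k → ℤ) : (Fin k → ℤ) →ₗ[ℤ] ℤ where
  toFun x := ∑ i, m i * x i
  map_add' x y := by simp [mul_add, Finset.sum_add_distrib]
  map_smul' c x := by simp [Finset.mul_sum, mul_left_comm]

lemma exists_unimodular_row {k : ℕ} (m v : Fin k → ℤ)
    (hv : ∑ i, m i * v i = 1) :
    ∃ M : Matrix (Fin k) (Fin k) ℤ, IsUnit M.det ∧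
      ∀ i : Fin k, (i : ℕ) = 0 → ∀ j, M i j = m j := by
  classical
  have hk : 0 < k := by
    rcases Nat.eq_zero_or_pos k with rfl | h
    · simp at hv
    · exact h
  set φ := lcomb m with hφdef
  have hφ : ∀ x, φ x = ∑ i, m i * x i := fun _ => rfl
  have hφv : φ v = 1 := hv
  let π : (Fin k → ℤ) →ₗ[ℤ] (Fin k → ℤ) := LinearMap.id - φ.smulRight v
  have hπ : ∀ x, π x ∈ LinearMap.ker φ := fun x => by
    simp only [π, LinearMap.mem_ker, LinearMap.sub_apply, LinearMap.id_apply,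
      LinearMap.smulRight_apply, map_sub, map_smul, hφv, smul_eq_mul, mul_one, sub_self]
  let L1 : (Fin k → ℤ) →ₗ[ℤ] ℤ × LinearMap.ker φ :=
    φ.prod (π.codRestrict _ hπ)
  let L2 : ℤ × LinearMap.ker φ →ₗ[ℤ] (Fin k → ℤ) :=
    (LinearMap.toSpanSingleton ℤ _ v).coprod (LinearMap.ker φ).subtype
  have h21 : L2.comp L1 = LinearMap.id := by
    apply LinearMap.ext
    intro x
    simp only [L1, L2, π, LinearMap.comp_apply, LinearMap.prod_apply, Function.prod,
      LinearMap.coprod_apply, LinearMap.codRestrict_apply, Submodule.subtype_apply,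
      LinearMap.toSpanSingleton_apply, LinearMap.sub_apply, LinearMap.id_apply]
    simp only [LinearMap.smulRight_apply]
    abel
  have h12 : L1.comp L2 = LinearMap.id := by
    apply LinearMap.ext
    rintro ⟨a, w, hw⟩
    have hw' : φ w = 0 := hw
    have h1 : L2 (a, ⟨w, hw⟩) = a • v + w := by
      simp [L2, LinearMap.coprod_apply, LinearMap.toSpanSingleton_apply,
        Submodule.subtype_apply]
    refine Prod.ext ?_ (Subtype.ext ?_)
    · show φ (L2 (a, ⟨w, hw⟩)) = a
      rw [h1, map_add, map_smul, hφv, hw', smul_eq_mul, mul_one, add_zero]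
    · show π (L2 (a, ⟨w, hw⟩)) = w
      rw [h1]
      have h2 : π (a • v + w) = (a • v + w) - φ (a • v + w) • v := by
        simp [π, LinearMap.sub_apply, LinearMap.smulRight_apply]
      rw [h2, map_add, map_smul, hφv, hw', smul_eq_mul, mul_one, add_zero]
      abel
  let e : (Fin k → ℤ) ≃ₗ[ℤ] ℤ × (LinearMap.ker φ) := LinearEquiv.ofLinear L1 L2 h12 h21
  obtain ⟨r, b⟩ := Submodule.basisOfPid (Pi.basisFun ℤ (Fin k)) (LinearMap.ker φ)
  let B0 : Module.Basis (Unit ⊕ Fin r) ℤ (ℤ × LinearMap.ker φ) := (Module.Basis.singleton Unit ℤ).prod b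
  let B : Module.Basis (Unit ⊕ Fin r) ℤ (Fin k → ℤ) := B0.map e.symm
  have hcard : 1 + r = k := by
    have h1 := Module.finrank_eq_card_basis B
    simp [Module.finrank_fintype_fun_eq_card] at h1
    omega
  let τ : (Unit ⊕ Fin r) ≃ Fin k :=
    ((Equiv.sumCongr (Equiv.ofUnique Unit (Fin 1)) (Equiv.refl (Fin r))).trans
      finSumFinEquiv).trans (finCongr hcard)
  have hτ : τ (Sum.inl ()) = ⟨0, hk⟩ := by
    ext
    simp [τ]
  let B' : Module.Basis (Fin k) ℤ (Fin k → ℤ) := B.reindex τ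
  let e' : (Fin k → ℤ) ≃ₗ[ℤ] (Fin k → ℤ) := B'.equivFun
  refine ⟨LinearMap.toMatrix' (e' : (Fin k → ℤ) →ₗ[ℤ] Fin k → ℤ), ?_, ?_⟩
  · apply Matrix.isUnit_det_of_left_inverse
      (B := LinearMap.toMatrix' (e'.symm : (Fin k → ℤ) →ₗ[ℤ] Fin k → ℤ))
    rw [← LinearMap.toMatrix'_comp, ← LinearMap.toMatrix'_id (R := ℤ) (n := Fin k)]
    congr 1
    ext x : 1
    simp
  · intro i hi j
    have hi' : i = ⟨0, hk⟩ := by ext; exact hi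
    subst hi'
    have hτs : τ.symm ⟨0, hk⟩ = Sum.inl () := by rw [← hτ, Equiv.symm_apply_apply]
    rw [LinearMap.toMatrix'_apply]
    show B'.equivFun _ _ = m j
    rw [Module.Basis.equivFun_apply]
    show (B.reindex τ).repr _ _ = m j
    rw [Module.Basis.repr_reindex_apply, hτs]
    show (B0.map e.symm).repr _ (Sum.inl ()) = m j
    have hmr : (B0.map e.symm).repr (fun j' => if j' = j then (1:ℤ) else 0)
        = B0.repr (e (fun j' => if j' = j then (1:ℤ) else 0)) := by
      simp [Module.Basis.map]
    rw [show (Pi.single j 1 : Fin k → ℤ) = fun j' => if j' = j then (1:ℤ) else 0 from by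
      ext j'; simp [Pi.single_apply]]
    rw [hmr, Module.Basis.prod_repr_inl, Module.Basis.singleton_repr]
    show φ (fun j' => if j' = j then (1:ℤ) else 0) = m j
    rw [hφ]
    simp

/-- Any nonempty proper subset of `(K^×)^k` of the form `{z : ∏ z_i^{m_i} = d}`, with
`d ∈ K^×` equal to `1` or a root of unity, is a finite union of `1`-fundamental subsets,
i.e. sets of the form `f_M⁻¹({d'} × (K^×)^{k-1})` with `M ∈ GL(k,ℤ)`, `d' ∈ K^×`. -/
theorem pre_fundamental_is_union_of_fundamental {K : Type*} [Field K] [IsAlgClosed K]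
    {k : ℕ} (d : Kˣ) (hd : ∃ n : ℕ, 0 < n ∧ d ^ n = 1) (mv : Fin k → ℤ)
    (hne : {z : Fin k → Kˣ | ∏ i, z i ^ (mv i) = d}.Nonempty)
    (hproper : {z : Fin k → Kˣ | ∏ i, z i ^ (mv i) = d} ≠ Set.univ) :
    ∃ (N : ℕ) (M : Fin N → Matrix (Fin k) (Fin k) ℤ) (d' : Fin N → Kˣ),
      (∀ y, IsUnit (M y).det) ∧
      {z : Fin k → Kˣ | ∏ i, z i ^ (mv i) = d} =
        ⋃ y : Fin N, {z | ∀ i : Fin k, (i : ℕ) = 0 → fA (M y) z i = d' y} := by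
  classical
  -- `mv ≠ 0`
  have hmv : mv ≠ 0 := by
    rintro rfl
    simp only [Pi.zero_apply, zpow_zero, Finset.prod_const_one] at hne hproper
    by_cases hd1 : d = 1
    · exact hproper (by ext z; simp [hd1])
    · obtain ⟨z, hz⟩ := hne
      exact hd1 hz.symm
  have hk : 0 < k := by
    rcases Nat.eq_zero_or_pos k with rfl | h
    · exact absurd (funext fun i => i.elim0) hmv
    · exact h
  obtain ⟨i₀, hi₀⟩ := Function.ne_iff.mp hmv
  -- the gcd `g₀` of the `mv i` as the generator of the range of `lcomb mv`
  set ψ := lcomb mv with hψdef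
  have hψ : ∀ x, ψ x = ∑ i, mv i * x i := fun _ => rfl
  set I : Submodule ℤ ℤ := LinearMap.range ψ with hIdef
  set g₀ : ℤ := Submodule.IsPrincipal.generator I with hg₀def
  have hdvd : ∀ i, g₀ ∣ mv i := by
    intro i
    refine (Submodule.IsPrincipal.mem_iff_generator_dvd I).mp ?_
    exact ⟨Pi.single i 1, by simp [hψ, Pi.single_apply]⟩
  have hg₀ : g₀ ≠ 0 := by
    intro h
    exact hi₀ (zero_dvd_iff.mp (h ▸ hdvd i₀))
  set m : Fin k → ℤ := fun i => mv i / g₀ with hmdef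
  have hm : ∀ i, mv i = m i * g₀ := fun i => (Int.ediv_mul_cancel (hdvd i)).symm
  obtain ⟨v, hv0⟩ : g₀ ∈ I := Submodule.IsPrincipal.generator_mem I
  have hv : ∑ i, m i * v i = 1 := by
    apply mul_left_cancel₀ hg₀
    rw [mul_one, Finset.mul_sum]
    rw [hψ] at hv0
    calc ∑ i, g₀ * (m i * v i) = ∑ i, mv i * v i :=
          Finset.sum_congr rfl fun i _ => by rw [hm i]; ring
      _ = g₀ := hv0
  obtain ⟨M0, hMdet, hMrow⟩ := exists_unimodular_row m v hv
  -- the set of `g₀`-th roots of `d` is finite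
  set S : Set Kˣ := {w : Kˣ | w ^ g₀ = d} with hSdef
  have hSfin : S.Finite := by
    set n : ℕ := g₀.natAbs with hndef
    have hn : 0 < n := Int.natAbs_pos.mpr hg₀
    have hfin : ∀ c : K, {x : K | x ^ n = c}.Finite := by
      intro c
      have h1 : {x : K | x ^ n = c} = {x | Polynomial.IsRoot (Polynomial.X ^ n - Polynomial.C c) x} := by
        ext x
        simp [Polynomial.IsRoot, sub_eq_zero]
      rw [h1]
      exact Polynomial.finite_setOf_isRoot (Polynomial.X_pow_sub_C_ne_zero hn c)
    have hsub : S ⊆ (fun w : Kˣ => (w : K)) ⁻¹'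
        ({x : K | x ^ n = (d : K)} ∪ {x : K | x ^ n = ((d⁻¹ : Kˣ) : K)}) := by
      intro w hw
      have hw' : w ^ g₀ = d := hw
      simp only [Set.mem_preimage, Set.mem_union, Set.mem_setOf_eq]
      rcases Int.natAbs_eq g₀ with h | h
      · left
        have : w ^ (n : ℤ) = d := by rw [← h]; exact hw'
        rw [zpow_natCast] at this
        exact_mod_cast congrArg (Units.val) this
      · right
        have : w ^ (-(n : ℤ)) = d := by rw [← h]; exact hw'
        rw [zpow_neg, zpow_natCast] at this
        have h2 : w ^ n = d⁻¹ := by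
          rw [← this, inv_inv]
        exact_mod_cast congrArg (Units.val) h2
    exact Set.Finite.subset
      (Set.Finite.preimage (Set.injOn_of_injective Units.val_injective) ((hfin _).union (hfin _))) hsub
  -- enumerate the roots
  set N : ℕ := hSfin.toFinset.card with hNdef
  set eqv := hSfin.toFinset.equivFin with heqv
  set d' : Fin N → Kˣ := fun y => ((eqv.symm y : Kˣ)) with hd'def
  have hmem : ∀ w : Kˣ, w ∈ S ↔ ∃ y, d' y = w := by
    intro w
    constructor
    · intro hw
      refine ⟨eqv ⟨w, hSfin.mem_toFinset.mpr hw⟩, ?_⟩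
      simp [hd'def]
    · rintro ⟨y, rfl⟩
      exact hSfin.mem_toFinset.mp (eqv.symm y).2
  refine ⟨N, fun _ => M0, d', fun _ => hMdet, ?_⟩
  ext z
  simp only [Set.mem_setOf_eq, Set.mem_iUnion]
  have hfa : ∀ i : Fin k, (i : ℕ) = 0 → fA M0 z i = ∏ j, z j ^ m j := by
    intro i hi
    exact Finset.prod_congr rfl fun j _ => by rw [hMrow i hi j]
  set w : Kˣ := ∏ j, z j ^ m j with hwdef
  have hprod : ∏ i, z i ^ mv i = w ^ g₀ := by
    have h1 : w ^ g₀ = ∏ j, (z j ^ m j) ^ g₀ := by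
      rw [hwdef]
      exact map_prod (zpowGroupHom (α := Kˣ) g₀) (fun j => z j ^ m j) Finset.univ
    rw [h1]
    refine Finset.prod_congr rfl fun i _ => ?_
    rw [← zpow_mul, ← hm i]
  constructor
  · intro h
    have hwS : w ∈ S := by rw [hSdef, Set.mem_setOf_eq, ← hprod]; exact h
    obtain ⟨y, hy⟩ := (hmem w).mp hwS
    exact ⟨y, fun i hi => (hfa i hi).trans hy.symm⟩
  · rintro ⟨y, hy⟩
    have h0 := hy ⟨0, hk⟩ rfl
    rw [hfa ⟨0, hk⟩ rfl] at h0
    have hwS : w ∈ S := (hmem w).mpr ⟨y, h0.symm⟩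
    rw [hprod]
    exact hwS
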